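/- For all coprime-free positive integers a₁, a₂, the double series ∑_{d₁,d₂ ≥ 1} μ(d₁)μ(d₂) / (d₁ d₂ · lcm(d₁/gcd(a₁,d₁), d₂/gcd(a₂,d₂))) converges absolutely. -/

import Mathlib

open ArithmeticFunction
open scoped ArithmeticFunction.Moebius

lemma abs_moebius_le_one' (n : ℕ) : |(μ n : ℝ)| ≤ 1 := by
  by_cases h : Squarefree n
  · rw [moebius_apply_of_squarefree h]
    push_cast
    rw [abs_pow, abs_neg, abs_one, one_pow]
  · rw [moebius_eq_zero_of_not_squarefree h]
    simp

set_option maxHeartbeats 1000000 in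
/-- The double series `∑_{d₁,d₂ ≥ 1} μ(d₁)μ(d₂)/(d₁ d₂ [d₁/(a₁,d₁), d₂/(a₂,d₂)])`
converges absolutely, for all positive integers `a₁, a₂`. -/
theorem C1_series_abs_convergent (a₁ a₂ : ℕ) (ha₁ : 0 < a₁) (ha₂ : 0 < a₂) :
    Summable fun p : ℕ+ × ℕ+ =>
      |((μ p.1 : ℝ) * (μ p.2 : ℝ)) /
        ((p.1 : ℝ) * (p.2 : ℝ) *
          (Nat.lcm ((p.1 : ℕ) / Nat.gcd a₁ p.1) ((p.2 : ℕ) / Nat.gcd a₂ p.2) : ℝ))| := by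
  have hs : Summable (fun n : ℕ+ => ((n : ℕ) : ℝ) ^ (-(3/2 : ℝ))) := by
    have h := (Real.summable_nat_rpow (p := -(3/2 : ℝ))).2 (by norm_num)
    exact h.comp_injective (fun a b h => PNat.coe_injective h)
  have hbound : Summable (fun p : ℕ+ × ℕ+ =>
      (Real.sqrt a₁ * ((p.1 : ℕ) : ℝ) ^ (-(3/2:ℝ))) *
      (Real.sqrt a₂ * ((p.2 : ℕ) : ℝ) ^ (-(3/2:ℝ)))) :=
    Summable.mul_of_nonneg (hs.mul_left _) (hs.mul_left _)
      (fun n => mul_nonneg (Real.sqrt_nonneg _) (Real.rpow_nonneg (by positivity) _))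
      (fun n => mul_nonneg (Real.sqrt_nonneg _) (Real.rpow_nonneg (by positivity) _))
  refine hbound.of_nonneg_of_le (fun p => abs_nonneg _) ?_
  rintro ⟨d₁, d₂⟩
  dsimp only
  set x := (d₁ : ℕ) / Nat.gcd a₁ d₁ with hxdef
  set y := (d₂ : ℕ) / Nat.gcd a₂ d₂ with hydef
  set L := Nat.lcm x y with hLdef
  have hg₁ : 0 < Nat.gcd a₁ d₁ := Nat.gcd_pos_of_pos_left _ ha₁
  have hg₂ : 0 < Nat.gcd a₂ d₂ := Nat.gcd_pos_of_pos_left _ ha₂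
  have hx : 0 < x := Nat.div_pos (Nat.le_of_dvd d₁.pos (Nat.gcd_dvd_right _ _)) hg₁
  have hy : 0 < y := Nat.div_pos (Nat.le_of_dvd d₂.pos (Nat.gcd_dvd_right _ _)) hg₂
  have hL : 0 < L := Nat.pos_of_ne_zero (Nat.lcm_ne_zero hx.ne' hy.ne')
  -- key natural-number inequality: d₁ * d₂ ≤ a₁ * a₂ * (L * L)
  have hd₁x : (d₁ : ℕ) ≤ a₁ * x := by
    calc (d₁ : ℕ) = Nat.gcd a₁ d₁ * x := (Nat.mul_div_cancel' (Nat.gcd_dvd_right _ _)).symm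
    _ ≤ a₁ * x := Nat.mul_le_mul_right _ (Nat.gcd_le_left _ ha₁)
  have hd₂y : (d₂ : ℕ) ≤ a₂ * y := by
    calc (d₂ : ℕ) = Nat.gcd a₂ d₂ * y := (Nat.mul_div_cancel' (Nat.gcd_dvd_right _ _)).symm
    _ ≤ a₂ * y := Nat.mul_le_mul_right _ (Nat.gcd_le_left _ ha₂)
  have hxL : x ≤ L := Nat.le_of_dvd hL (Nat.dvd_lcm_left _ _)
  have hyL : y ≤ L := Nat.le_of_dvd hL (Nat.dvd_lcm_right _ _)
  have key : (d₁ : ℕ) * d₂ ≤ a₁ * a₂ * (L * L) := by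
    calc (d₁ : ℕ) * d₂ ≤ (a₁ * x) * (a₂ * y) := Nat.mul_le_mul hd₁x hd₂y
    _ = a₁ * a₂ * (x * y) := by ring
    _ ≤ a₁ * a₂ * (L * L) := Nat.mul_le_mul_left _ (Nat.mul_le_mul hxL hyL)
  -- real version
  have keyR : Real.sqrt ((d₁ : ℝ) * (d₂ : ℝ)) ≤ Real.sqrt a₁ * Real.sqrt a₂ * (L : ℝ) := by
    have h1 : ((d₁ : ℕ) : ℝ) * (d₂ : ℕ) ≤ (a₁ : ℝ) * a₂ * ((L : ℝ) * L) := by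
      exact_mod_cast key
    calc Real.sqrt ((d₁ : ℝ) * (d₂ : ℝ)) ≤ Real.sqrt ((a₁ : ℝ) * a₂ * ((L : ℝ) * L)) :=
          Real.sqrt_le_sqrt h1
    _ = Real.sqrt a₁ * Real.sqrt a₂ * (L : ℝ) := by
          rw [Real.sqrt_mul (by positivity), Real.sqrt_mul (by positivity),
            Real.sqrt_mul_self (by positivity)]
  have hd₁pos : (0 : ℝ) < (d₁ : ℕ) := by exact_mod_cast d₁.pos
  have hd₂pos : (0 : ℝ) < (d₂ : ℕ) := by exact_mod_cast d₂.pos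
  have hLpos : (0 : ℝ) < (L : ℝ) := by exact_mod_cast hL
  have hD : (0 : ℝ) < (d₁ : ℝ) * (d₂ : ℝ) * (L : ℝ) := by positivity
  have hrpow : ∀ n : ℕ, 0 < n → ((n : ℝ)) ^ (-(3/2 : ℝ)) = ((n : ℝ) * Real.sqrt n)⁻¹ := by
    intro n hn
    have hn' : (0 : ℝ) < n := by exact_mod_cast hn
    rw [Real.rpow_neg hn'.le, show (3/2 : ℝ) = 1 + 1/2 by norm_num,
      Real.rpow_add hn', Real.rpow_one, ← Real.sqrt_eq_rpow]
  have habs : |(μ (d₁ : ℕ) : ℝ) * (μ (d₂ : ℕ) : ℝ)| ≤ 1 := by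
    rw [abs_mul]
    exact mul_le_one₀ (abs_moebius_le_one' _) (abs_nonneg _) (abs_moebius_le_one' _)
  calc |((μ (d₁:ℕ) : ℝ) * (μ (d₂:ℕ) : ℝ)) / ((d₁ : ℝ) * (d₂ : ℝ) * (L : ℝ))|
      = |(μ (d₁:ℕ) : ℝ) * (μ (d₂:ℕ) : ℝ)| / ((d₁ : ℝ) * (d₂ : ℝ) * (L : ℝ)) := by
        rw [abs_div, abs_of_pos hD]
    _ ≤ 1 / ((d₁ : ℝ) * (d₂ : ℝ) * (L : ℝ)) := by
        apply div_le_div_of_nonneg_right habs hD.le |>.trans_eq rfl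
    _ ≤ (Real.sqrt a₁ * ((d₁:ℕ) : ℝ) ^ (-(3/2:ℝ))) * (Real.sqrt a₂ * ((d₂:ℕ) : ℝ) ^ (-(3/2:ℝ))) := by
        rw [hrpow _ d₁.pos, hrpow _ d₂.pos]
        have hs₁ : (0:ℝ) < Real.sqrt d₁ := Real.sqrt_pos.2 hd₁pos
        have hs₂ : (0:ℝ) < Real.sqrt d₂ := Real.sqrt_pos.2 hd₂pos
        have h2 : Real.sqrt ((d₁:ℕ):ℝ) * Real.sqrt ((d₂:ℕ):ℝ) ≤
            Real.sqrt a₁ * Real.sqrt a₂ * (L:ℝ) := by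
          rw [← Real.sqrt_mul hd₁pos.le]; exact keyR
        have h3 := mul_le_mul_of_nonneg_left h2 (mul_pos hd₁pos hd₂pos).le
        rw [show (Real.sqrt a₁ * (((d₁:ℕ):ℝ) * Real.sqrt ((d₁:ℕ):ℝ))⁻¹) *
            (Real.sqrt a₂ * (((d₂:ℕ):ℝ) * Real.sqrt ((d₂:ℕ):ℝ))⁻¹)
            = (Real.sqrt a₁ * Real.sqrt a₂) /
              ((((d₁:ℕ):ℝ) * Real.sqrt ((d₁:ℕ):ℝ)) * (((d₂:ℕ):ℝ) * Real.sqrt ((d₂:ℕ):ℝ))) by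
          field_simp]
        rw [div_le_div_iff₀ hD (by positivity)]
        nlinarith [h3]
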